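/- Formulations (CP1) and (P2) have the same LP relaxation bound: v(CP1) = v(P2), where v(CP1) is the infimum of f over F(CP1) and v(P2) is the infimum of f over F(P2). -/

import Mathlib

open Finset
open scoped Classical

noncomputable section

/-- Radius of a nonempty set `S` of open facilities: the largest, over clients `i`,
of the distance from `i` to the closest facility in `S`. -/
def radius {N M : ℕ} (hN : 0 < N) (d : Fin N → Fin M → ℝ)
    (S : Finset (Fin M)) (hS : S.Nonempty) : ℝ :=
  (univ : Finset (Fin N)).sup' ⟨⟨0, hN⟩, mem_univ _⟩ fun i => S.inf' hS fun j => d i j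

/-- Optimal radius of the `p`-center problem. -/
def opt {N M : ℕ} (hN : 0 < N) (d : Fin N → Fin M → ℝ) (p : ℕ) : ℝ :=
  sInf { r | ∃ S : Finset (Fin M), ∃ hS : S.Nonempty, S.card ≤ p ∧ r = radius hN d S hS }

/-- Objective function `f(y, z) = D^0 + ∑_{k=1}^K (D^k - D^{k-1}) z^k`
(`z` is 0-indexed: entry `k : Fin K` stands for the paper's `z^{k+1}`). -/
def obj {K : ℕ} (D : Fin (K + 1) → ℝ) (z : Fin K → ℝ) : ℝ :=
  D 0 + ∑ k : Fin K, (D k.succ - D k.castSucc) * z k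

/-- Ordering constraints `z^k ≥ z^{k+1}`, `k ∈ {1, …, K-1}` (0-indexed `z`). -/
def Ordered {K : ℕ} (z : Fin K → ℝ) : Prop :=
  ∀ k : Fin K, ∀ h : (k : ℕ) + 1 < K, z ⟨(k : ℕ) + 1, h⟩ ≤ z k

/-- `ActiveIdx d D i k` says that the paper index `κ = k+1` belongs to `S_i ∪ {K}`:
either `κ ≤ K - 1` and some facility `j` satisfies `d i j = D^κ`, or `κ = K`. -/
def ActiveIdx {N M K : ℕ} (d : Fin N → Fin M → ℝ) (D : Fin (K + 1) → ℝ)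
    (i : Fin N) (k : Fin K) : Prop :=
  ((k : ℕ) + 1 < K ∧ ∃ j, d i j = D k.succ) ∨ (k : ℕ) + 1 = K

/-- LP-relaxed feasible set of formulation `(P2)`. -/
def FP2 {N M K : ℕ} (d : Fin N → Fin M → ℝ) (D : Fin (K + 1) → ℝ) (p : ℕ) :
    Set ((Fin M → ℝ) × (Fin K → ℝ)) :=
  { yz | (∀ j, 0 ≤ yz.1 j ∧ yz.1 j ≤ 1) ∧ (∀ k, 0 ≤ yz.2 k ∧ yz.2 k ≤ 1) ∧
    1 ≤ ∑ j, yz.1 j ∧ ∑ j, yz.1 j ≤ (p : ℝ) ∧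
    ∀ i : Fin N, ∀ k : Fin K,
      1 ≤ yz.2 k + ∑ j ∈ univ.filter (fun j => d i j < D k.succ), yz.1 j }

/-- LP-relaxed feasible set of formulation `(CP1)`. -/
def FCP1 {N M K : ℕ} (d : Fin N → Fin M → ℝ) (D : Fin (K + 1) → ℝ) (p : ℕ) :
    Set ((Fin M → ℝ) × (Fin K → ℝ)) :=
  { yz | (∀ j, 0 ≤ yz.1 j ∧ yz.1 j ≤ 1) ∧ (∀ k, 0 ≤ yz.2 k ∧ yz.2 k ≤ 1) ∧
    1 ≤ ∑ j, yz.1 j ∧ ∑ j, yz.1 j ≤ (p : ℝ) ∧ Ordered yz.2 ∧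
    ∀ i : Fin N, ∀ k : Fin K, ActiveIdx d D i k →
      1 ≤ yz.2 k + ∑ j ∈ univ.filter (fun j => d i j < D k.succ), yz.1 j }

/-- Integer feasible solutions of formulation `(CP1)`. -/
def CP1Int {N M K : ℕ} (d : Fin N → Fin M → ℝ) (D : Fin (K + 1) → ℝ) (p : ℕ) :
    Set ((Fin M → ℝ) × (Fin K → ℝ)) :=
  { yz | (∀ j, yz.1 j = 0 ∨ yz.1 j = 1) ∧ (∀ k, yz.2 k = 0 ∨ yz.2 k = 1) ∧
    1 ≤ ∑ j, yz.1 j ∧ ∑ j, yz.1 j ≤ (p : ℝ) ∧ Ordered yz.2 ∧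
    ∀ i : Fin N, ∀ k : Fin K, ActiveIdx d D i k →
      1 ≤ yz.2 k + ∑ j ∈ univ.filter (fun j => d i j < D k.succ), yz.1 j }

/-- LP-relaxed feasible set of formulation `(CP2)`. -/
def FCP2 {N M K : ℕ} (d : Fin N → Fin M → ℝ) (D : Fin (K + 1) → ℝ) (p : ℕ) :
    Set ((Fin M → ℝ) × ℝ) :=
  { yr | (∀ j, 0 ≤ yr.1 j ∧ yr.1 j ≤ 1) ∧ 0 ≤ yr.2 ∧ yr.2 ≤ (K : ℝ) ∧
    1 ≤ ∑ j, yr.1 j ∧ ∑ j, yr.1 j ≤ (p : ℝ) ∧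
    ∀ i : Fin N, ∀ k : Fin K, ActiveIdx d D i k →
      ((k : ℕ) + 1 : ℝ) ≤ yr.2 +
        ((k : ℕ) + 1 : ℝ) * ∑ j ∈ univ.filter (fun j => d i j < D k.succ), yr.1 j }

/-- Integer feasible solutions of formulation `(CP2)`. -/
def CP2Int {N M K : ℕ} (d : Fin N → Fin M → ℝ) (D : Fin (K + 1) → ℝ) (p : ℕ)
    (y : Fin M → ℝ) (r : ℤ) : Prop :=
  (∀ j, y j = 0 ∨ y j = 1) ∧ 0 ≤ r ∧ r ≤ (K : ℤ) ∧
    1 ≤ ∑ j, y j ∧ ∑ j, y j ≤ (p : ℝ) ∧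
    ∀ i : Fin N, ∀ k : Fin K, ActiveIdx d D i k →
      ((k : ℕ) + 1 : ℝ) ≤ (r : ℝ) +
        ((k : ℕ) + 1 : ℝ) * ∑ j ∈ univ.filter (fun j => d i j < D k.succ), y j

lemma ord_anti {K : ℕ} {z : Fin K → ℝ} (hz : Ordered z) :
    ∀ a b : Fin K, (a : ℕ) ≤ (b : ℕ) → z b ≤ z a := by
  intro a b hab
  obtain ⟨n, hn⟩ : ∃ n, (b : ℕ) = a + n := ⟨b - a, by omega⟩
  induction n generalizing b with
  | zero => have : a = b := Fin.ext (by omega); rw [this]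
  | succ n ih =>
    have hcK : (a : ℕ) + n < K := by have := b.isLt; omega
    set c : Fin K := ⟨a + n, hcK⟩ with hc
    have h1 : (c : ℕ) + 1 < K := by have := b.isLt; simp [hc]; omega
    have hb : b = ⟨(c : ℕ) + 1, h1⟩ := Fin.ext (by simp [hc]; omega)
    calc z b = z ⟨(c : ℕ) + 1, h1⟩ := by rw [hb]
    _ ≤ z c := hz c h1
    _ ≤ z a := ih c (Nat.le_add_right _ _) (by simp [hc])

lemma fcp1_subset_fp2 {N M K : ℕ}
    (d : Fin N → Fin M → ℝ) (p : ℕ)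
    (D : Fin (K + 1) → ℝ) (hD : StrictMono D)
    (hrange : Set.range D = { x : ℝ | ∃ i j, d i j = x }) :
    FCP1 d D p ⊆ FP2 d D p := by
  rintro ⟨y, z⟩ ⟨h01y, h01z, hs1, hsp, hord, hcov⟩
  refine ⟨h01y, h01z, hs1, hsp, ?_⟩
  intro i k
  -- least active index ≥ k
  set Q : ℕ → Prop := fun m => (k : ℕ) ≤ m ∧ ∃ h : m < K, ActiveIdx d D i ⟨m, h⟩ with hQdef
  have hQtop : Q (K - 1) := by
    refine ⟨by have := k.isLt; omega, ⟨by have := k.isLt; omega, Or.inr ?_⟩⟩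
    simp only
    have := k.isLt; omega
  have hex : ∃ m, Q m := ⟨K - 1, hQtop⟩
  set m0 := Nat.find hex with hm0def
  obtain ⟨hkm0, hm0K, hact⟩ : (k : ℕ) ≤ m0 ∧ ∃ h : m0 < K, ActiveIdx d D i ⟨m0, h⟩ :=
    Nat.find_spec hex
  set κ : Fin K := ⟨m0, hm0K⟩ with hκ
  have hfilter :
      (univ.filter fun j => d i j < D k.succ) = (univ.filter fun j => d i j < D κ.succ) := by
    ext j
    simp only [mem_filter, mem_univ, true_and]
    constructor
    · intro hlt
      exact hlt.trans_le (hD.monotone (by simp [Fin.le_def, hκ]; omega))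
    · intro hlt
      by_contra hnot
      push_neg at hnot
      obtain ⟨t, ht⟩ : d i j ∈ Set.range D := by
        rw [hrange]; exact ⟨i, j, rfl⟩
      have h1 : (k : ℕ) + 1 ≤ (t : ℕ) := by
        have : D k.succ ≤ D t := ht ▸ hnot
        have := (hD.le_iff_le).mp this
        simpa [Fin.le_def] using this
      have h2 : (t : ℕ) < m0 + 1 := by
        have : D t < D κ.succ := ht ▸ hlt
        have := (hD.lt_iff_lt).mp this
        simpa [Fin.lt_def, hκ] using this
      have hmK : (t : ℕ) - 1 < K := by omega
      have hQm : Q ((t : ℕ) - 1) := by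
        refine ⟨by omega, ⟨hmK, ?_⟩⟩
        by_cases hcase : (t : ℕ) - 1 + 1 < K
        · refine Or.inl ⟨hcase, ⟨j, ?_⟩⟩
          have : (⟨(t : ℕ) - 1, hmK⟩ : Fin K).succ = t := Fin.ext (by simp; omega)
          rw [this]; exact ht.symm
        · exact Or.inr (by omega)
      exact Nat.find_min hex (by omega) hQm
  have hzk : z κ ≤ z k := ord_anti hord k κ hkm0
  calc (1 : ℝ) ≤ z κ + ∑ j ∈ univ.filter (fun j => d i j < D κ.succ), y j := hcov i κ hact
  _ = z κ + ∑ j ∈ univ.filter (fun j => d i j < D k.succ), y j := by rw [hfilter]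
  _ ≤ z k + ∑ j ∈ univ.filter (fun j => d i j < D k.succ), y j := by
      exact add_le_add_left hzk _

/-- `(CP1)` and `(P2)` have the same LP relaxation bound. -/
theorem stmt4 {N M K : ℕ} (hN : 0 < N) (hM : 0 < M)
    (d : Fin N → Fin M → ℝ) (p : ℕ) (hp1 : 1 ≤ p) (hpM : p ≤ M)
    (D : Fin (K + 1) → ℝ) (hD : StrictMono D)
    (hrange : Set.range D = { x : ℝ | ∃ i j, d i j = x }) :
    sInf { v | ∃ yz ∈ FCP1 d D p, v = obj D yz.2 } =
      sInf { v | ∃ yz ∈ FP2 d D p, v = obj D yz.2 } := by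
  set A := { v | ∃ yz ∈ FCP1 d D p, v = obj D yz.2 } with hA
  set B := { v | ∃ yz ∈ FP2 d D p, v = obj D yz.2 } with hB
  have hAB : A ⊆ B := by
    rintro v ⟨yz, hyz, rfl⟩
    exact ⟨yz, fcp1_subset_fp2 d p D hD hrange hyz, rfl⟩
  -- a trivial feasible point of (CP1)
  have hAne : A.Nonempty := by
    refine ⟨obj D (fun _ => 1), ⟨(fun j => if j = ⟨0, hM⟩ then 1 else 0, fun _ => 1),
      ⟨?_, ?_, ?_, ?_, ?_, ?_⟩, rfl⟩⟩
    · intro j; by_cases h : j = ⟨0, hM⟩ <;> simp [h]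
    · intro k; norm_num
    · simp
    · simp; exact_mod_cast hp1
    · intro k h; exact le_refl _
    · intro i k _
      have h0 : (0 : ℝ) ≤ ∑ j ∈ univ.filter (fun j => d i j < D k.succ),
          (if j = ⟨0, hM⟩ then (1 : ℝ) else 0) :=
        Finset.sum_nonneg fun j _ => by by_cases h : j = ⟨0, hM⟩ <;> simp [h]
      exact le_add_of_le_of_nonneg le_rfl h0
  have hBne : B.Nonempty := hAne.mono hAB
  -- lower bound D 0
  have hlbA : ∀ v ∈ A, D 0 ≤ v := by
    rintro v ⟨⟨y, z⟩, ⟨_, h01z, _⟩, rfl⟩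
    have : (0 : ℝ) ≤ ∑ k : Fin K, (D k.succ - D k.castSucc) * z k :=
      Finset.sum_nonneg fun k _ =>
        mul_nonneg (sub_nonneg.mpr (hD (Fin.castSucc_lt_succ : k.castSucc < k.succ)).le) (h01z k).1
    simp only [obj]; linarith
  have hlbB : ∀ v ∈ B, D 0 ≤ v := by
    rintro v ⟨⟨y, z⟩, ⟨_, h01z, _⟩, rfl⟩
    have : (0 : ℝ) ≤ ∑ k : Fin K, (D k.succ - D k.castSucc) * z k :=
      Finset.sum_nonneg fun k _ =>
        mul_nonneg (sub_nonneg.mpr (hD (Fin.castSucc_lt_succ : k.castSucc < k.succ)).le) (h01z k).1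
    simp only [obj]; linarith
  have hbddA : BddBelow A := ⟨D 0, hlbA⟩
  have hbddB : BddBelow B := ⟨D 0, hlbB⟩
  refine le_antisymm ?_ (csInf_le_csInf hbddB hAne hAB)
  refine le_csInf hBne ?_
  rintro v ⟨⟨y, z⟩, ⟨h01y, h01z, hs1, hsp, hcov⟩, rfl⟩
  -- running minimum
  set z' : Fin K → ℝ := fun k => (Finset.Iic k).inf' ⟨k, Finset.mem_Iic.mpr le_rfl⟩ z with hz'
  have hmin : ∀ k : Fin K, ∃ m, m ≤ k ∧ z' k = z m := by
    intro k
    obtain ⟨m, hm, hmeq⟩ := Finset.exists_mem_eq_inf' ⟨k, Finset.mem_Iic.mpr le_rfl⟩ z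
    exact ⟨m, Finset.mem_Iic.mp hm, hmeq⟩
  have hle : ∀ m k : Fin K, m ≤ k → z' k ≤ z m := fun m k hmk =>
    Finset.inf'_le _ (Finset.mem_Iic.mpr hmk)
  have hz'mem : ((y, z') : (Fin M → ℝ) × (Fin K → ℝ)) ∈ FCP1 d D p := by
    refine ⟨h01y, ?_, hs1, hsp, ?_, ?_⟩
    · intro k
      obtain ⟨m, hm, hmeq⟩ := hmin k
      constructor
      · show 0 ≤ z' k
        rw [hmeq]; exact (h01z m).1
      · exact (hle k k le_rfl).trans (h01z k).2
    · intro k h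
      obtain ⟨m, hm, hmeq⟩ := hmin k
      show z' ⟨(k : ℕ) + 1, h⟩ ≤ z' k
      rw [hmeq]
      exact hle m _ (hm.trans (Fin.le_def.mpr (Nat.le_succ _)))
    · intro i k _
      obtain ⟨m, hm, hmeq⟩ := hmin k
      have hsub : (univ.filter fun j => d i j < D m.succ) ⊆
          (univ.filter fun j => d i j < D k.succ) := by
        intro j hj
        simp only [mem_filter, mem_univ, true_and] at hj ⊢
        exact hj.trans_le (hD.monotone (Fin.succ_le_succ_iff.mpr hm))
      calc (1 : ℝ) ≤ z m + ∑ j ∈ univ.filter (fun j => d i j < D m.succ), y j := hcov i m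
      _ ≤ z m + ∑ j ∈ univ.filter (fun j => d i j < D k.succ), y j :=
          add_le_add_right (Finset.sum_le_sum_of_subset_of_nonneg hsub
            (fun j _ _ => (h01y j).1)) _
      _ = z' k + ∑ j ∈ univ.filter (fun j => d i j < D k.succ), y j := by rw [hmeq]
  have hobj : obj D z' ≤ obj D z := by
    simp only [obj]
    have : ∑ k : Fin K, (D k.succ - D k.castSucc) * z' k ≤
        ∑ k : Fin K, (D k.succ - D k.castSucc) * z k :=
      Finset.sum_le_sum fun k _ =>
        mul_le_mul_of_nonneg_left (hle k k le_rfl)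
          (sub_nonneg.mpr (hD (Fin.castSucc_lt_succ : k.castSucc < k.succ)).le)
    linarith
  exact (csInf_le hbddA ⟨(y, z'), hz'mem, rfl⟩).trans hobj
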